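/- Suppose (K, ν) is a henselian valued field, f ∈ R_ν[x] is monic and irreducible over K with f̄ = φ̄^l for a monic polynomial φ ∈ R_ν[x] whose reduction φ̄ is irreducible in k_ν[x], and l ≥ 2. Let α be a root of f, L = K(α), and let ω be the unique valuation of L extending ν. If R_ν[α] is integrally closed, then the set Γ_ν^+ of positive elements of the value group has a smallest element σ, and ω(φ(α)) = σ/l (equivalently, l·ω(φ(α)) = σ). -/

import Mathlib

open Polynomial

section Helpers

variable {K L : Type*} [Field K] [Field L] [Algebra K L]
variable {Γ₀ : Type*} [LinearOrderedCommGroupWithZero Γ₀]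

/-- The Gauss valuation of a polynomial `P ∈ K[x]`, computed in the value group of a
valuation `w` on an extension `L` of `K`: multiplicatively it is the supremum of the
`w`-values of the coefficients (additively, the minimum of the valuations of the
coefficients). -/
noncomputable def gaussVal {Γ' : Type*} [LinearOrderedCommGroupWithZero Γ']
    (w : Valuation L Γ') (P : K[X]) : Γ' :=
  (Finset.range (P.natDegree + 1)).sup'
    (Finset.nonempty_range_iff.mpr (Nat.succ_ne_zero _))
    fun n => w (algebraMap K L (P.coeff n))

/-- `σ` is the smallest positive element of the value group of `v`: multiplicatively,
`σ` is the greatest element `< 1` among the nonzero values of `v`. -/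
def IsMinPosValue (v : Valuation K Γ₀) (σ : Γ₀) : Prop :=
  IsGreatest {γ : Γ₀ | γ ≠ 0 ∧ γ < 1 ∧ ∃ x : K, v x = γ} σ

/-- The set of valuation subrings of `L` whose corresponding valuation extends `v`,
i.e. those lying over the valuation ring of `v`. (Valuations of `L` up to equivalence
are the same thing as valuation subrings of `L`.) -/
def valuationExtensions (v : Valuation K Γ₀) : Set (ValuationSubring L) :=
  {O | O.comap (algebraMap K L) = v.valuationSubring}

end Helpers

set_option maxHeartbeats 2000000 in
set_option synthInstance.maxHeartbeats 400000 in
/-- **Corollary 2.4**: suppose `(K, ν)` is henselian, `f ∈ R_ν[x]` monic irreducible over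
`K` with `f̄ = φ̄^l`, `φ̄` irreducible over `k_ν` and `l ≥ 2`.  Let `α` be a root of `f`,
`L = K(α)`, and `ω` the (unique) valuation of `L` extending `ν`.  If `R_ν[α]` is
integrally closed then `Γ_ν⁺` has a smallest element `σ` and `ω(φ(α)) = σ / l`
(multiplicatively: `ω(φ(α))^l` equals (the image in `Γ_ω` of) `σ`). -/
theorem stmt_7
    {K L : Type*} [Field K] [Field L] [Algebra K L]
    {Γ₀ : Type*} [LinearOrderedCommGroupWithZero Γ₀]
    (v : Valuation K Γ₀) [HenselianLocalRing ↥v.valuationSubring]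
    [Algebra ↥v.valuationSubring L] [IsScalarTower (↥v.valuationSubring) K L]
    (f : Polynomial ↥v.valuationSubring) (hfmonic : f.Monic)
    (hfirr : Irreducible (f.map (algebraMap (↥v.valuationSubring) K)))
    (φ : Polynomial ↥v.valuationSubring) (hφmonic : φ.Monic)
    (hφirr : Irreducible (φ.map (IsLocalRing.residue ↥v.valuationSubring)))
    (l : ℕ) (hl : 2 ≤ l)
    (hfbar : f.map (IsLocalRing.residue ↥v.valuationSubring) =
      (φ.map (IsLocalRing.residue ↥v.valuationSubring)) ^ l)
    (α : L) (hαroot : Polynomial.aeval α f = 0)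
    (hαgen : Algebra.adjoin K {α} = ⊤)
    {Γ' : Type*} [LinearOrderedCommGroupWithZero Γ'] (ω : Valuation L Γ')
    (hω : (ω.comap (algebraMap K L)).IsEquiv v)
    (hIC : Algebra.adjoin (↥v.valuationSubring) {α} =
      integralClosure (↥v.valuationSubring) L) :
    ∃ a : K, IsMinPosValue v (v a) ∧
      ω (Polynomial.aeval α φ) ^ l = ω (algebraMap K L a) := by
  classical
  -- ### Part 1 : basic facts about `v`, `ω` and the valuation subring
  have hval_le : ∀ x : K, ω (algebraMap K L x) ≤ 1 ↔ v x ≤ 1 := by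
    intro x
    have := hω x 1
    simpa using this
  have hval_lt : ∀ x : K, ω (algebraMap K L x) < 1 ↔ v x < 1 := by
    intro x
    have := hω 1 x
    simp only [Valuation.comap_apply, map_one] at this
    constructor
    · intro h
      by_contra hcon
      push_neg at hcon
      exact absurd (this.mpr hcon) (not_le.mpr h)
    · intro h
      by_contra hcon
      push_neg at hcon
      exact absurd (this.mp hcon) (not_le.mpr h)
  have hval_zero : ∀ x : K, ω (algebraMap K L x) = 0 ↔ x = 0 := by
    intro x
    rw [Valuation.zero_iff, map_eq_zero_iff _ (algebraMap K L).injective]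
  have hmemMax : ∀ c : ↥v.valuationSubring,
      c ∈ IsLocalRing.maximalIdeal ↥v.valuationSubring ↔ v ↑c < 1 := by
    intro c
    rw [IsLocalRing.mem_maximalIdeal, mem_nonunits_iff]
    constructor
    · intro hnu
      rcases lt_or_ge (v (c : K)) 1 with h | h
      · exact h
      · exfalso
        apply hnu
        have hone : v (c : K) = 1 := le_antisymm c.2 h
        have hcne : (c : K) ≠ 0 := by
          intro h0
          rw [h0, map_zero] at hone
          exact zero_ne_one hone
        have hinv : (c : K)⁻¹ ∈ v.valuationSubring := by
          rw [Valuation.mem_valuationSubring_iff, map_inv₀, hone, inv_one]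
        exact IsUnit.of_mul_eq_one (a := c) ⟨(c : K)⁻¹, hinv⟩
          (Subtype.ext (by simp [mul_inv_cancel₀ hcne]))
    · intro hlt hu
      obtain ⟨d, hd⟩ := isUnit_iff_exists_inv.mp hu
      have h1 : v ((c : K) * (d : K)) = 1 := by
        have := congrArg (fun z : ↥v.valuationSubring => v (z : K)) hd
        simpa using this
      rw [map_mul] at h1
      have : v (c : K) * v (d : K) ≤ v (c : K) * 1 := mul_le_mul_right d.2 _
      rw [h1, mul_one] at this
      exact absurd (lt_of_le_of_lt this hlt) (lt_irrefl _)
  -- algebraMap from O to L factors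
  have htower : ∀ c : ↥v.valuationSubring,
      algebraMap (↥v.valuationSubring) L c = algebraMap K L (c : K) := by
    intro c
    rw [IsScalarTower.algebraMap_apply (↥v.valuationSubring) K L]
    rfl
  have hωO : ∀ c : ↥v.valuationSubring, ω (algebraMap (↥v.valuationSubring) L c) ≤ 1 := by
    intro c
    rw [htower, hval_le]
    exact c.2
  have hωM : ∀ c : ↥v.valuationSubring, c ∈ IsLocalRing.maximalIdeal ↥v.valuationSubring →
      ω (algebraMap (↥v.valuationSubring) L c) < 1 := by
    intro c hc
    rw [htower, hval_lt]
    exact (hmemMax c).mp hc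
  -- ### Part 0 : degrees
  have hmpos : 0 < φ.natDegree := by
    by_contra h
    push_neg at h
    have h0 : (φ.map (IsLocalRing.residue ↥v.valuationSubring)).natDegree = 0 := by
      rw [hφmonic.natDegree_map]
      omega
    exact hφirr.not_isUnit (by
      rw [(hφmonic.map _).natDegree_eq_zero.mp h0]
      exact isUnit_one)
  have hn : f.natDegree = l * φ.natDegree := by
    have h1 : (f.map (IsLocalRing.residue ↥v.valuationSubring)).natDegree = f.natDegree :=
      hfmonic.natDegree_map _
    have h2 : ((φ.map (IsLocalRing.residue ↥v.valuationSubring)) ^ l).natDegree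
        = l * φ.natDegree := by
      rw [natDegree_pow, hφmonic.natDegree_map]
    rw [hfbar, h2] at h1
    omega
  have hmn : φ.natDegree < f.natDegree := by
    have : 2 * φ.natDegree ≤ l * φ.natDegree := Nat.mul_le_mul_right _ hl
    omega
  have hnpos : 0 < f.natDegree := lt_trans hmpos hmn
  -- f over K is the minimal polynomial of α
  have hfKmonic : (f.map (algebraMap (↥v.valuationSubring) K)).Monic := hfmonic.map _
  have hfKroot : Polynomial.aeval α (f.map (algebraMap (↥v.valuationSubring) K)) = 0 := by
    rw [aeval_map_algebraMap]
    exact hαroot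
  have hminpoly : minpoly K α = f.map (algebraMap (↥v.valuationSubring) K) :=
    (minpoly.eq_of_irreducible_of_monic hfirr hfKroot hfKmonic).symm
  have hαKint : IsIntegral K α :=
    ⟨f.map (algebraMap (↥v.valuationSubring) K), hfKmonic,
      by rw [← Polynomial.aeval_def]; exact hfKroot⟩
  have hfinKL : Module.Finite K L := by
    have h1 := hαKint.fg_adjoin_singleton
    rw [hαgen, Algebra.top_toSubmodule] at h1
    exact Module.finite_def.mpr h1
  have hαOint : IsIntegral (↥v.valuationSubring) α :=
    ⟨f, hfmonic, by rw [← Polynomial.aeval_def]; exact hαroot⟩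
  -- ### Part 2 : the ring S = R[α]
  set S : Subalgebra (↥v.valuationSubring) L := Algebra.adjoin (↥v.valuationSubring) {α}
    with hSdef
  have hcancel : ∀ x a : Γ', x ≠ 0 → x * a ≤ x → a ≤ 1 := by
    intro x a hx h
    have h2 := mul_le_mul_right h x⁻¹
    rwa [← mul_assoc, inv_mul_cancel₀ hx, one_mul] at h2
  have hωα : ω α ≤ 1 := by
    by_contra hcon
    push_neg at hcon
    have hαne : ω α ≠ 0 := by
      intro h0
      rw [h0] at hcon
      exact absurd hcon (by simp)
    have hexp : Polynomial.aeval α f = ∑ i ∈ Finset.range (f.natDegree + 1),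
        algebraMap (↥v.valuationSubring) L (f.coeff i) * α ^ i := by
      rw [Polynomial.aeval_eq_sum_range]
      exact Finset.sum_congr rfl fun i _ => Algebra.smul_def _ _
    have hsplit : (∑ i ∈ Finset.range f.natDegree,
        algebraMap (↥v.valuationSubring) L (f.coeff i) * α ^ i) + α ^ f.natDegree = 0 := by
      rw [← hαroot, hexp, Finset.sum_range_succ, hfmonic.coeff_natDegree, map_one, one_mul]
    have h0 : α ^ f.natDegree = -(∑ i ∈ Finset.range f.natDegree,
        algebraMap (↥v.valuationSubring) L (f.coeff i) * α ^ i) :=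
      eq_neg_of_add_eq_zero_right hsplit
    have hcontr : ω (α ^ f.natDegree) ≤ ω α ^ (f.natDegree - 1) := by
      rw [h0, Valuation.map_neg]
      apply Valuation.map_sum_le
      intro i hi
      rw [Finset.mem_range] at hi
      rw [ω.map_mul, ω.map_pow]
      calc ω (algebraMap (↥v.valuationSubring) L (f.coeff i)) * ω α ^ i
          ≤ 1 * ω α ^ i := mul_le_mul_left (hωO _) _
        _ = ω α ^ i := one_mul _
        _ ≤ ω α ^ (f.natDegree - 1) := pow_le_pow_right' (le_of_lt hcon) (by omega)
    have hrw : ω α ^ f.natDegree = ω α ^ (f.natDegree - 1) * ω α := by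
      rw [← pow_succ]
      congr 1
      omega
    rw [ω.map_pow, hrw] at hcontr
    exact absurd hcon (not_lt.mpr
      (hcancel (ω α ^ (f.natDegree - 1)) (ω α) (pow_ne_zero _ hαne) hcontr))
  have hωS : ∀ z : L, z ∈ S → ω z ≤ 1 := by
    intro z hz
    induction hz using Algebra.adjoin_induction with
    | mem x hx => rw [Set.mem_singleton_iff] at hx; rw [hx]; exact hωα
    | algebraMap r => exact hωO r
    | add x y hx hy ihx ihy => exact le_trans (ω.map_add x y) (max_le ihx ihy)
    | mul x y hx hy ihx ihy =>
        rw [ω.map_mul]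
        calc ω x * ω y ≤ 1 * 1 := mul_le_mul' ihx ihy
        _ = 1 := mul_one 1
  have hαS : α ∈ S := Algebra.self_mem_adjoin_singleton _ α
  -- a representation lemma
  have hSrep : ∀ z : L, z ∈ S →
      ∃ P : Polynomial ↥v.valuationSubring, P.natDegree < f.natDegree ∧
        Polynomial.aeval α P = z := by
    intro z hz
    rw [hSdef, Algebra.adjoin_singleton_eq_range_aeval] at hz
    obtain ⟨P₀, hP₀⟩ := hz
    refine ⟨P₀ %ₘ f, ?_, ?_⟩
    · exact natDegree_modByMonic_lt P₀ hfmonic (by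
        intro h1
        rw [h1] at hnpos
        simp at hnpos)
    · have := modByMonic_add_div P₀ f
      have h2 := congrArg (Polynomial.aeval α) this
      rw [map_add, map_mul, hαroot, zero_mul, add_zero] at h2
      rw [h2]
      exact hP₀
  -- ### Part 3 : β = φ(α) and its valuation
  have hβS : Polynomial.aeval α φ ∈ S := by
    rw [hSdef, Algebra.adjoin_singleton_eq_range_aeval]
    exact ⟨φ, rfl⟩
  have hβne : Polynomial.aeval α φ ≠ 0 := by
    intro hz
    have hr : Polynomial.aeval α (φ.map (algebraMap (↥v.valuationSubring) K)) = 0 := by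
      rw [aeval_map_algebraMap]
      exact hz
    have hdvd := minpoly.dvd K α hr
    rw [hminpoly] at hdvd
    have hne : (φ.map (algebraMap (↥v.valuationSubring) K)) ≠ 0 := (hφmonic.map _).ne_zero
    have hled := Polynomial.natDegree_le_of_dvd hdvd hne
    rw [hfmonic.natDegree_map, hφmonic.natDegree_map] at hled
    omega
  have hθne : ω (Polynomial.aeval α φ) ≠ 0 := by
    rw [Valuation.ne_zero_iff]
    exact hβne
  have hQα : Polynomial.aeval α (φ ^ l - f) = (Polynomial.aeval α φ) ^ l := by
    rw [map_sub, map_pow, hαroot, sub_zero]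
  have hQcoeff : ∀ i, (φ ^ l - f).coeff i ∈ IsLocalRing.maximalIdeal ↥v.valuationSubring := by
    intro i
    have h0 : ((φ ^ l - f).map (IsLocalRing.residue ↥v.valuationSubring)).coeff i = 0 := by
      rw [Polynomial.map_sub, Polynomial.map_pow, hfbar, sub_self, coeff_zero]
    rw [coeff_map] at h0
    exact Ideal.Quotient.eq_zero_iff_mem.mp h0
  have hθpow_lt : ω (Polynomial.aeval α φ) ^ l < 1 := by
    rw [← ω.map_pow, ← hQα, Polynomial.aeval_eq_sum_range]
    apply Valuation.map_sum_lt _ one_ne_zero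
    intro i _
    rw [Algebra.smul_def, ω.map_mul, ω.map_pow]
    calc ω (algebraMap (↥v.valuationSubring) L ((φ ^ l - f).coeff i)) * ω α ^ i
        ≤ ω (algebraMap (↥v.valuationSubring) L ((φ ^ l - f).coeff i)) * 1 :=
          mul_le_mul_right (Left.pow_le_one_of_le hωα i) _
      _ = ω (algebraMap (↥v.valuationSubring) L ((φ ^ l - f).coeff i)) := mul_one _
      _ < 1 := hωM _ (hQcoeff i)
  have hθlt : ω (Polynomial.aeval α φ) < 1 := by
    by_contra h
    push_neg at h
    exact absurd (lt_of_le_of_lt (Left.one_le_pow_of_le h _ : (1:Γ') ≤ _) hθpow_lt) (lt_irrefl _)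
  -- ### Part 4 : the maximal ideal of S
  set αS : ↥S := ⟨α, hαS⟩ with hαSdef
  set 𝔪 : Ideal ↥S := Ideal.span ((algebraMap (↥v.valuationSubring) ↥S ''
      ((IsLocalRing.maximalIdeal ↥v.valuationSubring : Ideal _) : Set _)) ∪ {⟨Polynomial.aeval α φ, hβS⟩}) with h𝔪def
  have hcoe : ∀ P : Polynomial ↥v.valuationSubring,
      ((Polynomial.aeval αS P : ↥S) : L) = Polynomial.aeval α P := by
    intro P
    rw [hαSdef]
    exact Polynomial.aeval_subalgebra_coe P S _
  have hcoeAlg : ∀ c : ↥v.valuationSubring,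
      ((algebraMap (↥v.valuationSubring) ↥S c : ↥S) : L)
        = algebraMap (↥v.valuationSubring) L c := by
    intro c
    rfl
  have hpolyMem : ∀ T : Polynomial ↥v.valuationSubring,
      (∀ i, T.coeff i ∈ IsLocalRing.maximalIdeal ↥v.valuationSubring) →
      ∀ I : Ideal ↥S,
        (∀ c : ↥v.valuationSubring, c ∈ IsLocalRing.maximalIdeal ↥v.valuationSubring →
          algebraMap (↥v.valuationSubring) ↥S c ∈ I) →
        Polynomial.aeval αS T ∈ I := by
    intro T hT I hI
    rw [Polynomial.aeval_eq_sum_range]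
    apply Ideal.sum_mem
    intro i _
    rw [Algebra.smul_def]
    exact I.mul_mem_right _ (hI _ (hT i))
  have hSint : Algebra.IsIntegral (↥v.valuationSubring) ↥S := by
    constructor
    intro z
    exact (isIntegral_algHom_iff S.val Subtype.val_injective).mp
      (IsIntegral.of_mem_of_fg S hαOint.fg_adjoin_singleton _ z.2)
  have hβ𝔪 : (⟨Polynomial.aeval α φ, hβS⟩ : ↥S) ∈ 𝔪 :=
    Ideal.subset_span (Or.inr rfl)
  have hNsub : ∀ N : Ideal ↥S, N.IsMaximal → ∀ z, z ∈ N → z ∈ 𝔪 := by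
    intro N hN z hzN
    by_contra hz𝔪
    have hcomap : (N.comap (algebraMap (↥v.valuationSubring) ↥S)) =
        IsLocalRing.maximalIdeal ↥v.valuationSubring :=
      IsLocalRing.eq_maximalIdeal
        (Ideal.isMaximal_comap_of_isIntegral_of_isMaximal (R := ↥v.valuationSubring) N)
    have hMN : ∀ c : ↥v.valuationSubring, c ∈ IsLocalRing.maximalIdeal ↥v.valuationSubring →
        algebraMap (↥v.valuationSubring) ↥S c ∈ N := by
      intro c hc
      rw [← hcomap] at hc
      exact hc
    obtain ⟨P, hPdeg, hPval⟩ := hSrep _ z.2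
    have hPz : Polynomial.aeval αS P = z := Subtype.ext (by rw [hcoe]; exact hPval)
    have hβval : Polynomial.aeval αS φ = (⟨Polynomial.aeval α φ, hβS⟩ : ↥S) :=
      Subtype.ext (by rw [hcoe])
    have hnd : ¬ (φ.map (IsLocalRing.residue ↥v.valuationSubring))
        ∣ (P.map (IsLocalRing.residue ↥v.valuationSubring)) := by
      intro hdvd
      obtain ⟨D', hD'⟩ := hdvd
      obtain ⟨D, hD⟩ := Polynomial.map_surjective _ (IsLocalRing.residue_surjective) D'
      have hTcoeff : ∀ i, (P - φ * D).coeff i ∈ IsLocalRing.maximalIdeal ↥v.valuationSubring := by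
        intro i
        have h0 : ((P - φ * D).map (IsLocalRing.residue ↥v.valuationSubring)).coeff i = 0 := by
          rw [Polynomial.map_sub, Polynomial.map_mul, hD, ← hD', sub_self, coeff_zero]
        rw [coeff_map] at h0
        exact Ideal.Quotient.eq_zero_iff_mem.mp h0
      apply hz𝔪
      have h1 : Polynomial.aeval αS (P - φ * D) ∈ 𝔪 := by
        apply hpolyMem _ hTcoeff
        intro c hc
        exact Ideal.subset_span (Or.inl ⟨c, hc, rfl⟩)
      have h2 : Polynomial.aeval αS φ * Polynomial.aeval αS D ∈ 𝔪 := by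
        apply Ideal.mul_mem_right
        rw [hβval]
        exact hβ𝔪
      have h3 : z = Polynomial.aeval αS (P - φ * D)
          + Polynomial.aeval αS φ * Polynomial.aeval αS D := by
        rw [← map_mul, ← map_add, sub_add_cancel, hPz]
      rw [h3]
      exact Ideal.add_mem _ h1 h2
    have hcop : IsCoprime ((φ.map (IsLocalRing.residue ↥v.valuationSubring)) ^ l)
        (P.map (IsLocalRing.residue ↥v.valuationSubring)) :=
      (hφirr.coprime_iff_not_dvd.mpr hnd).pow_left
    obtain ⟨A', B', hAB⟩ := hcop
    obtain ⟨A, hA⟩ := Polynomial.map_surjective _ (IsLocalRing.residue_surjective) A'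
    obtain ⟨B, hB⟩ := Polynomial.map_surjective _ (IsLocalRing.residue_surjective) B'
    have hTcoeff : ∀ i, (A * f + B * P - 1).coeff i
        ∈ IsLocalRing.maximalIdeal ↥v.valuationSubring := by
      intro i
      have h0 : ((A * f + B * P - 1).map (IsLocalRing.residue ↥v.valuationSubring)).coeff i
          = 0 := by
        rw [Polynomial.map_sub, Polynomial.map_add, Polynomial.map_mul, Polynomial.map_mul,
          Polynomial.map_one, hA, hB, hfbar, hAB, sub_self, coeff_zero]
      rw [coeff_map] at h0
      exact Ideal.Quotient.eq_zero_iff_mem.mp h0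
    have h1 : Polynomial.aeval αS (A * f + B * P - 1) ∈ N := hpolyMem _ hTcoeff N hMN
    have haf : Polynomial.aeval αS f = 0 := Subtype.ext (by rw [hcoe, hαroot]; rfl)
    have h2 : Polynomial.aeval αS (A * f + B * P - 1)
        = Polynomial.aeval αS B * z - 1 := by
      rw [map_sub, map_add, map_mul, map_mul, haf, mul_zero, zero_add, map_one, hPz]
    rw [h2] at h1
    have h3 : (1 : ↥S) ∈ N := by
      have h4 := N.sub_mem (N.mul_mem_left (Polynomial.aeval αS B) hzN) h1
      simpa using h4
    exact hN.ne_top ((Ideal.eq_top_iff_one N).mpr h3)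
  have hUnit : ∀ z : ↥S, z ∉ 𝔪 → IsUnit z := by
    intro z hz
    by_contra hu
    obtain ⟨N, hNmax, hN⟩ := Ideal.exists_le_maximal (Ideal.span {z})
      (by rwa [Ne, Ideal.span_singleton_eq_top])
    exact hz (hNsub N hNmax z (hN (Ideal.subset_span rfl)))
  have h𝔪lt : ∀ z : ↥S, z ∈ 𝔪 → ω ↑z < 1 := by
    intro z hz
    rw [h𝔪def] at hz
    induction hz using Submodule.span_induction with
    | mem x hx =>
        rcases hx with hx | hx
        · obtain ⟨c, hc, rfl⟩ := hx
          rw [hcoeAlg]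
          exact hωM c hc
        · rw [Set.mem_singleton_iff] at hx
          rw [hx]
          exact hθlt
    | zero => simpa using (zero_lt_one : (0:Γ') < 1)
    | add x y hx hy ihx ihy => exact lt_of_le_of_lt (ω.map_add _ _) (max_lt ihx ihy)
    | smul a x hx ih =>
        have hax : ((a • x : ↥S) : L) = (a : L) * (x : L) := rfl
        rw [hax, ω.map_mul]
        exact lt_of_le_of_lt (mul_le_of_le_one_left' (hωS _ a.2)) ih
  -- ### Part 5 : every element of L with ω x ≤ 1 lies in S
  have hstar : ∀ x : L, ω x ≤ 1 → x ∈ S := by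
    intro x hx1
    by_cases hx0 : x = 0
    · rw [hx0]; exact S.zero_mem
    have hxint : IsIntegral K x := IsIntegral.of_finite K x
    have hgmonic : (minpoly K x).Monic := minpoly.monic hxint
    have hd1 : 1 ≤ (minpoly K x).natDegree := minpoly.natDegree_pos hxint
    set d := (minpoly K x).natDegree with hddef
    obtain ⟨j, hjmem, hjmax⟩ := Finset.exists_max_image (Finset.range (d+1))
      (fun i => v ((minpoly K x).coeff i)) ⟨d, Finset.self_mem_range_succ d⟩
    rw [Finset.mem_range] at hjmem
    set b := (minpoly K x).coeff j with hbdef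
    have hcoeffd : (minpoly K x).coeff d = 1 := hgmonic.coeff_natDegree
    have hb1 : (1 : Γ₀) ≤ v b := by
      have h := hjmax d (Finset.self_mem_range_succ d)
      simp only [hcoeffd, map_one] at h
      exact h
    have hbne : b ≠ 0 := by
      intro h0
      rw [h0, map_zero] at hb1
      exact absurd hb1 (by simp)
    have hbv0 : v b ≠ 0 := by
      intro h0
      rw [h0] at hb1
      exact absurd hb1 (by simp)
    have hcmem : ∀ i, (minpoly K x).coeff i / b ∈ v.valuationSubring := by
      intro i
      rw [Valuation.mem_valuationSubring_iff, map_div₀, div_eq_mul_inv]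
      by_cases hi : i < d + 1
      · calc v ((minpoly K x).coeff i) * (v b)⁻¹ ≤ v b * (v b)⁻¹ :=
            mul_le_mul_left (hjmax i (Finset.mem_range.mpr hi)) _
          _ = 1 := mul_inv_cancel₀ hbv0
      · rw [coeff_eq_zero_of_natDegree_lt (by omega), map_zero, zero_mul]
        exact zero_le_one
    set ss : ℕ → L := fun k => ∑ i ∈ Finset.range (d + 1 - k),
      algebraMap K L ((minpoly K x).coeff (i + k) / b) * x ^ i with hssdef
    have hbL : algebraMap K L b ≠ 0 :=
      fun h => hbne ((map_eq_zero_iff _ (algebraMap K L).injective).mp h)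
    have hs0 : ss 0 = 0 := by
      have hmul : algebraMap K L b * ss 0 = Polynomial.aeval x (minpoly K x) := by
        show algebraMap K L b * (∑ i ∈ Finset.range (d + 1 - 0),
          algebraMap K L ((minpoly K x).coeff (i + 0) / b) * x ^ i) = _
        rw [Polynomial.aeval_eq_sum_range, Finset.mul_sum]
        simp only [Nat.sub_zero, Nat.add_zero]
        apply Finset.sum_congr rfl
        intro i _
        rw [Algebra.smul_def (R := K), ← mul_assoc, ← map_mul]
        congr 2
        rw [mul_comm, div_mul_cancel₀ _ hbne]
      have h0 := hmul.symm
      rw [minpoly.aeval] at h0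
      rcases mul_eq_zero.mp h0.symm with h | h
      · exact absurd h hbL
      · exact h
    have hrec : ∀ k, k < d →
        ss k = x * ss (k+1) + algebraMap K L ((minpoly K x).coeff k / b) := by
      intro k hk
      have h1 : d + 1 - k = (d - k) + 1 := by omega
      have h2 : d + 1 - (k+1) = d - k := by omega
      show (∑ i ∈ Finset.range (d + 1 - k),
          algebraMap K L ((minpoly K x).coeff (i + k) / b) * x ^ i)
        = x * (∑ i ∈ Finset.range (d + 1 - (k+1)),
          algebraMap K L ((minpoly K x).coeff (i + (k+1)) / b) * x ^ i)
          + algebraMap K L ((minpoly K x).coeff k / b)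
      rw [h1, h2, Finset.sum_range_succ', Finset.mul_sum]
      congr 1
      · apply Finset.sum_congr rfl
        intro i _
        have hidx : i + 1 + k = i + (k + 1) := by omega
        rw [hidx, pow_succ]
        ring
      · rw [Nat.zero_add, pow_zero, mul_one]
    have hs2 : ∀ k, k ≤ d → ss k * x ^ k
        = -∑ i ∈ Finset.range k, algebraMap K L ((minpoly K x).coeff i / b) * x ^ i := by
      intro k
      induction k with
      | zero => intro _; simp [hs0]
      | succ k ih =>
          intro hk
          have hk' : k < d := by omega
          have hih := ih (by omega)
          have hx' : x * ss (k+1) = ss k - algebraMap K L ((minpoly K x).coeff k / b) := by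
            rw [hrec k hk']; ring
          calc ss (k+1) * x ^ (k+1) = (x * ss (k+1)) * x ^ k := by ring
            _ = (ss k - algebraMap K L ((minpoly K x).coeff k / b)) * x ^ k := by rw [hx']
            _ = ss k * x ^ k - algebraMap K L ((minpoly K x).coeff k / b) * x ^ k := by ring
            _ = -∑ i ∈ Finset.range (k+1),
                algebraMap K L ((minpoly K x).coeff i / b) * x ^ i := by
                  rw [hih, Finset.sum_range_succ]; ring
    have hsS : ∀ k, 1 ≤ k → k ≤ d → ss k ∈ S := by
      intro k hk1 hkd
      set y : L := (x⁻¹) ^ (d-1) with hydef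
      set p : ℕ → L := fun t => x ^ t * y with hpdef
      set N : Submodule (↥v.valuationSubring) L :=
        Submodule.span (↥v.valuationSubring) (p '' (Set.Iio (2*d-1))) with hNdef
      have hNfg : N.FG := Submodule.fg_span ((Set.finite_Iio _).image p)
      have h1N : (1:L) ∈ N := by
        apply Submodule.subset_span
        refine ⟨d-1, Set.mem_Iio.mpr (by omega), ?_⟩
        show x ^ (d-1) * (x⁻¹) ^ (d-1) = 1
        rw [← mul_pow, mul_inv_cancel₀ hx0, one_pow]
      have hNne : N ≠ ⊥ := by
        intro h
        rw [h, Submodule.mem_bot] at h1N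
        exact one_ne_zero h1N
      have hgen : ∀ i t : ℕ, t < 2*d-1 →
          algebraMap K L ((minpoly K x).coeff i / b) * p t ∈ N := by
        intro i t ht
        have heq : algebraMap K L ((minpoly K x).coeff i / b) * p t
            = (⟨_, hcmem i⟩ : ↥v.valuationSubring) • p t := by
          rw [Algebra.smul_def, htower]
        rw [heq]
        exact Submodule.smul_mem _ _ (Submodule.subset_span ⟨t, Set.mem_Iio.mpr ht, rfl⟩)
      have hclosed : ∀ nn ∈ N, ss k • nn ∈ N := by
        intro nn hnn
        induction hnn using Submodule.span_induction with
        | mem z hz =>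
            obtain ⟨t, ht, rfl⟩ := hz
            rw [Set.mem_Iio] at ht
            rw [smul_eq_mul]
            by_cases hts : t ≤ d - 1
            · have hexp : ss k * p t = ∑ i ∈ Finset.range (d+1-k),
                  algebraMap K L ((minpoly K x).coeff (i+k) / b) * p (i+t) := by
                show (∑ i ∈ Finset.range (d+1-k),
                    algebraMap K L ((minpoly K x).coeff (i+k) / b) * x ^ i) * (x ^ t * y) = _
                rw [Finset.sum_mul]
                apply Finset.sum_congr rfl
                intro i _
                show _ = algebraMap K L ((minpoly K x).coeff (i+k) / b) * (x ^ (i+t) * y)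
                rw [pow_add]
                ring
              rw [hexp]
              apply Submodule.sum_mem
              intro i hi
              rw [Finset.mem_range] at hi
              exact hgen _ _ (by omega)
            · have htd : d ≤ t := by omega
              have hktle : k ≤ t := le_trans hkd htd
              have hexp : ss k * p t = -∑ i ∈ Finset.range k,
                  algebraMap K L ((minpoly K x).coeff i / b) * p (i+(t-k)) := by
                have hxk : (x : L) ^ t = x ^ k * x ^ (t-k) := by
                  rw [← pow_add]
                  congr 1
                  omega
                calc ss k * p t = (ss k * x ^ k) * (x ^ (t-k) * y) := by
                      show ss k * (x ^ t * y) = _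
                      rw [hxk]; ring
                  _ = (-∑ i ∈ Finset.range k,
                      algebraMap K L ((minpoly K x).coeff i / b) * x ^ i) * (x ^ (t-k) * y) := by
                        rw [hs2 k hkd]
                  _ = -∑ i ∈ Finset.range k,
                      algebraMap K L ((minpoly K x).coeff i / b) * p (i+(t-k)) := by
                        rw [neg_mul, Finset.sum_mul]
                        congr 1
                        apply Finset.sum_congr rfl
                        intro i _
                        show _ = algebraMap K L ((minpoly K x).coeff i / b) * (x ^ (i+(t-k)) * y)
                        rw [pow_add]
                        ring
              rw [hexp]
              apply Submodule.neg_mem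
              apply Submodule.sum_mem
              intro i hi
              rw [Finset.mem_range] at hi
              exact hgen _ _ (by omega)
        | zero => rw [smul_zero]; exact N.zero_mem
        | add z w hz hw ihz ihw => rw [smul_add]; exact N.add_mem ihz ihw
        | smul a z hz ih =>
            rw [smul_comm]
            exact N.smul_mem a ih
      have hint : IsIntegral (↥v.valuationSubring) (ss k) :=
        isIntegral_of_smul_mem_submodule N hNne hNfg (ss k) hclosed
      rw [hIC]
      exact hint
    by_cases hall : ∀ k, 1 ≤ k → k ≤ d → ∃ h : ss k ∈ S, (⟨ss k, h⟩ : ↥S) ∈ 𝔪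
    · exfalso
      have hsd : ss d = algebraMap K L (1 / b) := by
        show (∑ i ∈ Finset.range (d + 1 - d),
          algebraMap K L ((minpoly K x).coeff (i + d) / b) * x ^ i) = _
        rw [show d + 1 - d = 1 from by omega, Finset.sum_range_one, pow_zero, mul_one,
          Nat.zero_add, hcoeffd]
      obtain ⟨hsdS, hsd𝔪⟩ := hall d hd1 le_rfl
      have h1 : ω (algebraMap K L (1/b)) < 1 := by
        have h2 := h𝔪lt _ hsd𝔪
        rwa [← hsd]
      rw [hval_lt, one_div, map_inv₀] at h1
      have hvb : 1 < v b := by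
        by_contra hcon
        push_neg at hcon
        have h3 : (1:Γ₀) = v b * (v b)⁻¹ := (mul_inv_cancel₀ hbv0).symm
        have h4 : v b * (v b)⁻¹ ≤ 1 * (v b)⁻¹ := mul_le_mul_left hcon _
        rw [one_mul] at h4
        rw [h3] at h1
        exact absurd (lt_of_le_of_lt h4 h1) (lt_irrefl _)
      have hjd : j ≠ d := by
        intro h
        have : v b = 1 := by rw [hbdef, h, hcoeffd, map_one]
        rw [this] at hvb
        exact lt_irrefl _ hvb
      have hjlt : j < d := by omega
      have hrel := hrec j hjlt
      have hcj : (minpoly K x).coeff j / b = 1 := div_self hbne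
      rw [hcj, map_one] at hrel
      have hωsj : ω (ss j) < 1 := by
        rcases Nat.eq_zero_or_pos j with h0 | hpos
        · rw [h0, hs0]
          simpa using (zero_lt_one : (0:Γ') < 1)
        · obtain ⟨hS', hm'⟩ := hall j hpos (le_of_lt hjlt)
          exact h𝔪lt _ hm'
      have hωsj1 : ω (x * ss (j+1)) < 1 := by
        obtain ⟨hS', hm'⟩ := hall (j+1) (by omega) (by omega)
        rw [ω.map_mul]
        exact lt_of_le_of_lt (mul_le_of_le_one_left' hx1) (h𝔪lt _ hm')
      have h1eq : (1:L) = ss j - x * ss (j+1) := by rw [hrel]; ring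
      have hfin : ω (1:L) < 1 := by
        rw [h1eq]
        exact lt_of_le_of_lt (ω.map_sub _ _) (max_lt hωsj hωsj1)
      rw [ω.map_one] at hfin
      exact lt_irrefl _ hfin
    · push_neg at hall
      obtain ⟨k, hk1, hkd, hk⟩ := hall
      have hskS : ss k ∈ S := hsS k hk1 hkd
      have hu := hUnit _ (hk hskS)
      obtain ⟨u, hu1⟩ := isUnit_iff_exists_inv.mp hu
      have hxsk : x * ss k ∈ S := by
        have hxe : x * ss k = ss (k-1) - algebraMap K L ((minpoly K x).coeff (k-1) / b) := by
          have h5 := hrec (k-1) (by omega)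
          rw [show k - 1 + 1 = k from by omega] at h5
          rw [h5]; ring
        rw [hxe]
        apply S.sub_mem
        · rcases Nat.eq_zero_or_pos (k-1) with h0 | hpos
          · rw [h0, hs0]; exact S.zero_mem
          · exact hsS _ hpos (by omega)
        · have h7 := S.algebraMap_mem (⟨_, hcmem (k-1)⟩ : ↥v.valuationSubring)
          rw [htower] at h7
          exact h7
      have hcoe1 : (ss k) * (u : L) = 1 := by
        have h6 := congrArg (Subtype.val) hu1
        simpa using h6
      have hxx : x = (u : L) * (x * ss k) := by
        calc x = ((ss k) * (u:L)) * x := by rw [hcoe1, one_mul]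
          _ = (u:L) * (x * ss k) := by ring
      rw [hxx]
      exact S.mul_mem u.2 hxsk
  -- ### Part 6 : the key inequalities
  have hstrictmul : ∀ aa bb cc : Γ', cc ≠ 0 → aa < bb → aa * cc < bb * cc := by
    intro aa bb cc hcc h
    by_contra hcon
    push_neg at hcon
    have h2 := mul_le_mul_left hcon cc⁻¹
    rw [mul_assoc, mul_assoc, mul_inv_cancel₀ hcc, mul_one, mul_one] at h2
    exact absurd (lt_of_le_of_lt h2 h) (lt_irrefl _)
  have hclaim : ∀ c : K, c ≠ 0 → v c < 1 → ∀ i : ℕ, 1 ≤ i → i ≤ l - 1 →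
      ω (algebraMap K L c) < ω (Polynomial.aeval α φ) ^ i := by
    intro c hc0 hc1 i hi1 hil
    by_contra hcon
    push_neg at hcon
    have hωc0 : ω (algebraMap K L c) ≠ 0 := fun h => hc0 ((hval_zero c).mp h)
    have hcL : algebraMap K L c ≠ 0 :=
      fun h => hc0 ((map_eq_zero_iff _ (algebraMap K L).injective).mp h)
    set x : L := (Polynomial.aeval α φ) ^ i * (algebraMap K L c)⁻¹ with hxdef
    have hx1 : ω x ≤ 1 := by
      rw [hxdef, ω.map_mul, ω.map_pow, map_inv₀]
      calc ω (Polynomial.aeval α φ) ^ i * (ω (algebraMap K L c))⁻¹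
          ≤ ω (algebraMap K L c) * (ω (algebraMap K L c))⁻¹ := mul_le_mul_left hcon _
        _ = 1 := mul_inv_cancel₀ hωc0
    obtain ⟨P, hPdeg, hPval⟩ := hSrep x (hstar x hx1)
    have hre : Polynomial.aeval α ((φ.map (algebraMap (↥v.valuationSubring) K)) ^ i
        - Polynomial.C c * (P.map (algebraMap (↥v.valuationSubring) K))) = 0 := by
      rw [map_sub, map_pow, aeval_map_algebraMap, map_mul, aeval_C, aeval_map_algebraMap, hPval,
        hxdef, mul_comm (algebraMap K L c), mul_assoc, inv_mul_cancel₀ hcL, mul_one, sub_self]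
    have hdvd := minpoly.dvd K α hre
    rw [hminpoly] at hdvd
    have hGne : (φ.map (algebraMap (↥v.valuationSubring) K)) ^ i
        - Polynomial.C c * (P.map (algebraMap (↥v.valuationSubring) K)) ≠ 0 := by
      intro hG0
      have heq : (φ.map (algebraMap (↥v.valuationSubring) K)) ^ i
          = Polynomial.C c * (P.map (algebraMap (↥v.valuationSubring) K)) :=
        sub_eq_zero.mp hG0
      have hlead := congrArg Polynomial.leadingCoeff heq
      rw [Polynomial.Monic.leadingCoeff ((hφmonic.map _).pow _), Polynomial.leadingCoeff_mul,
        Polynomial.leadingCoeff_C] at hlead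
      have hlcv : v ((P.map (algebraMap (↥v.valuationSubring) K)).leadingCoeff) ≤ 1 := by
        rw [Polynomial.leadingCoeff, Polynomial.coeff_map]
        exact (P.coeff _).2
      have h1eq : (1:Γ₀) = v c * v ((P.map (algebraMap (↥v.valuationSubring) K)).leadingCoeff) := by
        rw [← map_mul, ← hlead, map_one]
      have hlt : v c * v ((P.map (algebraMap (↥v.valuationSubring) K)).leadingCoeff)
          ≤ v c * 1 := mul_le_mul_right hlcv _
      rw [mul_one] at hlt
      have hfin : (1:Γ₀) < 1 := lt_of_le_of_lt (h1eq ▸ hlt) hc1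
      exact lt_irrefl _ hfin
    have hdeg := Polynomial.natDegree_le_of_dvd hdvd hGne
    rw [hfmonic.natDegree_map] at hdeg
    have hdeg1 : ((φ.map (algebraMap (↥v.valuationSubring) K)) ^ i).natDegree
        = i * φ.natDegree := by
      rw [Polynomial.natDegree_pow, hφmonic.natDegree_map]
    have hdeg2 : (Polynomial.C c * (P.map (algebraMap (↥v.valuationSubring) K))).natDegree
        < f.natDegree :=
      lt_of_le_of_lt (Polynomial.natDegree_C_mul_le _ _)
        (lt_of_le_of_lt (Polynomial.natDegree_map_le) hPdeg)
    have hfinal : ((φ.map (algebraMap (↥v.valuationSubring) K)) ^ i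
        - Polynomial.C c * (P.map (algebraMap (↥v.valuationSubring) K))).natDegree
        < f.natDegree := by
      apply lt_of_le_of_lt (Polynomial.natDegree_sub_le _ _)
      apply max_lt _ hdeg2
      rw [hdeg1]
      have h13 : i * φ.natDegree ≤ (l-1) * φ.natDegree := Nat.mul_le_mul_right _ hil
      have h14 : (l-1) * φ.natDegree < l * φ.natDegree :=
        (Nat.mul_lt_mul_right hmpos).mpr (by omega)
      omega
    omega
  have h𝔪leθ : ∀ z : ↥S, z ∈ 𝔪 → ω ↑z ≤ ω (Polynomial.aeval α φ) := by
    intro z hz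
    rw [h𝔪def] at hz
    induction hz using Submodule.span_induction with
    | mem w hw =>
        rcases hw with hw | hw
        · obtain ⟨c, hc, rfl⟩ := hw
          rw [hcoeAlg, htower]
          by_cases hc0 : (c : K) = 0
          · rw [hc0, map_zero, map_zero]
            exact zero_le'
          · refine le_of_lt ?_
            have h8 := hclaim (c:K) hc0 ((hmemMax c).mp hc) 1 le_rfl (by omega)
            rwa [pow_one] at h8
        · rw [Set.mem_singleton_iff] at hw
          rw [hw]
    | zero => simpa using zero_le'
    | add x y hx hy ihx ihy => exact le_trans (ω.map_add _ _) (max_le ihx ihy)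
    | smul a x hx ih =>
        have hax : ((a • x : ↥S) : L) = (a : L) * (x : L) := rfl
        rw [hax, ω.map_mul]
        exact le_trans (mul_le_of_le_one_left' (hωS _ a.2)) ih
  have hmax : ∀ c : K, c ≠ 0 → v c < 1 →
      ω (algebraMap K L c) ≤ ω (Polynomial.aeval α φ) ^ l := by
    intro c hc0 hc1
    have h1 := hclaim c hc0 hc1 (l-1) (by omega) le_rfl
    have hθl1ne : ω (Polynomial.aeval α φ) ^ (l-1) ≠ 0 := pow_ne_zero _ hθne
    set yy : L := algebraMap K L c * ((Polynomial.aeval α φ) ^ (l-1))⁻¹ with hyydef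
    have hyval : ω yy = ω (algebraMap K L c) * (ω (Polynomial.aeval α φ) ^ (l-1))⁻¹ := by
      rw [hyydef, ω.map_mul, map_inv₀, ω.map_pow]
    have hylt : ω yy < 1 := by
      rw [hyval]
      calc ω (algebraMap K L c) * (ω (Polynomial.aeval α φ) ^ (l-1))⁻¹
          < ω (Polynomial.aeval α φ) ^ (l-1) * (ω (Polynomial.aeval α φ) ^ (l-1))⁻¹ :=
            hstrictmul _ _ _ (inv_ne_zero hθl1ne) h1
        _ = 1 := mul_inv_cancel₀ hθl1ne
    have hyS := hstar yy (le_of_lt hylt)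
    have hy𝔪 : (⟨yy, hyS⟩ : ↥S) ∈ 𝔪 := by
      by_contra hy
      obtain ⟨u, hu1⟩ := isUnit_iff_exists_inv.mp (hUnit _ hy)
      have hcoe1 : yy * (u : L) = 1 := by
        have h15 := congrArg Subtype.val hu1
        simpa using h15
      have h16 : ω yy * ω (u:L) = 1 := by rw [← ω.map_mul, hcoe1, ω.map_one]
      have hle : ω yy * ω (u:L) ≤ ω yy * 1 := mul_le_mul_right (hωS _ u.2) _
      rw [h16, mul_one] at hle
      exact absurd (lt_of_le_of_lt hle hylt) (lt_irrefl _)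
    have hyθ := h𝔪leθ _ hy𝔪
    have hrecon : ω (algebraMap K L c) = ω yy * ω (Polynomial.aeval α φ) ^ (l-1) := by
      rw [hyval, mul_assoc, inv_mul_cancel₀ hθl1ne, mul_one]
    rw [hrecon]
    calc ω yy * ω (Polynomial.aeval α φ) ^ (l-1)
        ≤ ω (Polynomial.aeval α φ) * ω (Polynomial.aeval α φ) ^ (l-1) :=
          mul_le_mul_left hyθ _
      _ = ω (Polynomial.aeval α φ) ^ l := by
          rw [← pow_succ']
          congr 1
          omega
  -- ### Part 7 : conclusion
  have hex : ∃ i ∈ Finset.range ((φ^l - f).natDegree + 1),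
      ω (Polynomial.aeval α φ) ^ l ≤ ω (algebraMap K L (((φ^l - f).coeff i : ↥v.valuationSubring) : K)) := by
    by_contra hcon
    push_neg at hcon
    have hlt : ω ((Polynomial.aeval α φ) ^ l) < ω (Polynomial.aeval α φ) ^ l := by
      rw [← hQα, Polynomial.aeval_eq_sum_range]
      apply Valuation.map_sum_lt _ (pow_ne_zero _ hθne)
      intro i hi
      rw [Algebra.smul_def, ω.map_mul, ω.map_pow]
      calc ω (algebraMap (↥v.valuationSubring) L ((φ^l - f).coeff i)) * ω α ^ i
          ≤ ω (algebraMap (↥v.valuationSubring) L ((φ^l - f).coeff i)) * 1 :=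
            mul_le_mul_right (Left.pow_le_one_of_le hωα i) _
        _ = ω (algebraMap (↥v.valuationSubring) L ((φ^l - f).coeff i)) := mul_one _
        _ < ω (Polynomial.aeval α φ) ^ l := by rw [htower]; exact hcon i hi
    rw [ω.map_pow] at hlt
    exact lt_irrefl _ hlt
  obtain ⟨i0, _, hge⟩ := hex
  set a : K := (((φ^l - f).coeff i0 : ↥v.valuationSubring) : K) with hadef
  have hava : v a < 1 := (hmemMax _).mp (hQcoeff i0)
  have ha0 : a ≠ 0 := by
    intro h
    rw [h, map_zero, map_zero] at hge
    exact pow_ne_zero l hθne (le_antisymm hge zero_le')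
  have haeq : ω (Polynomial.aeval α φ) ^ l = ω (algebraMap K L a) :=
    le_antisymm hge (hmax a ha0 hava)
  refine ⟨a, ⟨⟨(v.ne_zero_iff).mpr ha0, hava, a, rfl⟩, ?_⟩, haeq⟩
  rintro γ ⟨hγ0, hγ1, x', hx'⟩
  have hx'0 : x' ≠ 0 := by
    rintro rfl
    rw [map_zero] at hx'
    exact hγ0 hx'.symm
  have hx'1 : v x' < 1 := by rw [hx']; exact hγ1
  have h9 := hmax x' hx'0 hx'1
  rw [haeq] at h9
  have h12 := hω x' a
  simp only [Valuation.comap_apply] at h12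
  rw [← hx']
  exact h12.mp h9
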